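/- Let n ≥ k ≥ 2 be integers, p ∈ (0,1), and let A, B ⊆ {1,…,n} with |A| = |B| = k and ℓ := |A ∩ B| ∈ {1,…,k−1}. Let T_A be a tree with vertex set A and T_B a tree with vertex set B whose edge sets agree on pairs of vertices from A ∩ B, and suppose the induced forest T_A[A ∩ B] has exactly m connected components. If (k−ℓ)·p < 1 and 2(k−ℓ) − m + 1 > 0, then in G_{n,p} the probability of the event {G[A] = T_A, G[B] = T_B, every vertex outside A has at least 3 neighbors in A, and every vertex outside B has at least 3 neighbors in B} is at most ((k−ℓ)·p)^{2(k−ℓ)−m+1} times the probability of the event {G[A] = T_A and G[B] = T_B}. -/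

import Mathlib

open scoped Classical
open MeasureTheory Filter

/-- Bernoulli measure on `Bool` with success probability `p`. -/
noncomputable def bern (p : ℝ) : Measure Bool :=
  (ENNReal.ofReal p) • Measure.dirac true + (ENNReal.ofReal (1 - p)) • Measure.dirac false

/-- The binomial random graph measure `G_{n,p}`. -/
noncomputable def gnp (n : ℕ) (p : ℝ) : Measure (Sym2 (Fin n) → Bool) :=
  Measure.pi fun _ => bern p

/-- The simple graph determined by an outcome `ω`. -/
def graphOf {n : ℕ} (ω : Sym2 (Fin n) → Bool) : SimpleGraph (Fin n) where
  Adj u v := u ≠ v ∧ ω s(u, v) = true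
  symm := ⟨fun u v h => ⟨h.1.symm, by rw [Sym2.eq_swap]; exact h.2⟩⟩
  loopless := ⟨fun u h => h.1 rfl⟩

/-- `G[A] = T`: the induced subgraph of `G` on `A` has exactly the edges of `T`. -/
def inducedEq {n : ℕ} (G T : SimpleGraph (Fin n)) (A : Finset (Fin n)) : Prop :=
  ∀ u ∈ A, ∀ v ∈ A, (G.Adj u v ↔ T.Adj u v)

/-- Every vertex outside `A` has at least 3 neighbors in `A`. -/
def threeNbrs {n : ℕ} (G : SimpleGraph (Fin n)) (A : Finset (Fin n)) : Prop :=
  ∀ v ∉ A, 3 ≤ (A.filter fun u => G.Adj v u).card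

section MeasureAux
variable {ι : Type*} [Fintype ι]

lemma bern_apply (p : ℝ) (s : Set Bool) :
    bern p s = (if true ∈ s then ENNReal.ofReal p else 0) +
      (if false ∈ s then ENNReal.ofReal (1 - p) else 0) := by
  have hs : MeasurableSet s := .of_discrete
  simp [bern, Measure.dirac_apply' _ hs, Set.indicator_apply]

lemma bern_true (p : ℝ) : bern p {true} = ENNReal.ofReal p := by simp [bern_apply]

lemma bern_univ (p : ℝ) (h0 : 0 ≤ p) (h1 : p ≤ 1) : bern p Set.univ = 1 := by
  rw [bern_apply]
  simp only [Set.mem_univ, if_true]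
  rw [← ENNReal.ofReal_add h0 (by linarith)]
  norm_num

lemma bern_prob (p : ℝ) (h0 : 0 ≤ p) (h1 : p ≤ 1) : IsProbabilityMeasure (bern p) :=
  ⟨bern_univ p h0 h1⟩

/-- `S` depends only on coordinates in `c`. -/
def DependsOnC {ι : Type*} (c : Set ι) (S : Set (ι → Bool)) : Prop :=
  ∀ ω₁ ω₂ : ι → Bool, (∀ i ∈ c, ω₁ i = ω₂ i) → (ω₁ ∈ S ↔ ω₂ ∈ S)

lemma indep_two {ι : Type*} [Fintype ι] (p : ℝ) (h0 : 0 ≤ p) (h1 : p ≤ 1)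
    (c : Set ι) (S T : Set (ι → Bool))
    (hS : DependsOnC c S) (hT : DependsOnC cᶜ T) :
    Measure.pi (fun _ : ι => bern p) (S ∩ T) =
      Measure.pi (fun _ : ι => bern p) S * Measure.pi (fun _ : ι => bern p) T := by
  haveI : IsProbabilityMeasure (bern p) := bern_prob p h0 h1
  set μ := Measure.pi (fun _ : ι => bern p) with hμ
  set e := MeasurableEquiv.piEquivPiSubtypeProd (fun _ : ι => Bool) (· ∈ c) with he
  have hmp := measurePreserving_piEquivPiSubtypeProd (fun _ : ι => bern p) (· ∈ c)
  set S₁ : Set ({i // i ∈ c} → Bool) := (fun (ω : ι → Bool) (i : {i // i ∈ c}) => ω i.1) '' S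
  set T₂ : Set ({i // ¬ i ∈ c} → Bool) := (fun (ω : ι → Bool) (i : {i // ¬ i ∈ c}) => ω i.1) '' T
  have hSmem : ∀ ω : ι → Bool, (fun i : {i // i ∈ c} => ω i.1) ∈ S₁ ↔ ω ∈ S := by
    intro ω
    constructor
    · rintro ⟨ω', hω', hh⟩
      exact (hS ω' ω (fun i hi => congrFun hh ⟨i, hi⟩)).1 hω'
    · intro h; exact ⟨ω, h, rfl⟩
  have hTmem : ∀ ω : ι → Bool, (fun i : {i // ¬ i ∈ c} => ω i.1) ∈ T₂ ↔ ω ∈ T := by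
    intro ω
    constructor
    · rintro ⟨ω', hω', hh⟩
      exact (hT ω' ω (fun i hi => congrFun hh ⟨i, hi⟩)).1 hω'
    · intro h; exact ⟨ω, h, rfl⟩
  have key : ∀ (U : Set ({i // i ∈ c} → Bool)) (V : Set ({i // ¬ i ∈ c} → Bool)),
      μ (e ⁻¹' (U ×ˢ V)) = (Measure.pi fun _ => bern p) U * (Measure.pi fun _ => bern p) V := by
    intro U V
    rw [hmp.measure_preimage (MeasurableSet.of_discrete.nullMeasurableSet)]
    exact Measure.prod_prod U V
  have h1' : S ∩ T = e ⁻¹' (S₁ ×ˢ T₂) := by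
    ext ω
    simp only [Set.mem_inter_iff, Set.mem_preimage, Set.mem_prod]
    rw [show e ω = (fun i : {i // i ∈ c} => ω i.1, fun i : {i // ¬ i ∈ c} => ω i.1) from rfl]
    rw [hSmem, hTmem]
  have h2' : S = e ⁻¹' (S₁ ×ˢ Set.univ) := by
    ext ω
    simp only [Set.mem_preimage, Set.mem_prod, Set.mem_univ, and_true]
    rw [show e ω = (fun i : {i // i ∈ c} => ω i.1, fun i : {i // ¬ i ∈ c} => ω i.1) from rfl]
    exact (hSmem ω).symm
  have h3' : T = e ⁻¹' ((Set.univ : Set ({i // i ∈ c} → Bool)) ×ˢ T₂) := by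
    ext ω
    simp only [Set.mem_preimage, Set.mem_prod, Set.mem_univ, true_and]
    rw [show e ω = (fun i : {i // i ∈ c} => ω i.1, fun i : {i // ¬ i ∈ c} => ω i.1) from rfl]
    exact (hTmem ω).symm
  rw [h1', h2', h3', key, key, key]
  simp [measure_univ]

lemma indep_many {ι : Type*} [Fintype ι] (p : ℝ) (h0 : 0 ≤ p) (h1 : p ≤ 1)
    {α : Type*} (F : Finset α) (c0 : Set ι) (c : α → Set ι)
    (S0 : Set (ι → Bool)) (S : α → Set (ι → Bool))
    (hd0 : ∀ v ∈ F, Disjoint c0 (c v))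
    (hdc : ∀ v ∈ F, ∀ w ∈ F, v ≠ w → Disjoint (c v) (c w))
    (hS0 : DependsOnC c0 S0) (hS : ∀ v ∈ F, DependsOnC (c v) (S v)) :
    Measure.pi (fun _ : ι => bern p) (S0 ∩ ⋂ v ∈ F, S v) =
      Measure.pi (fun _ : ι => bern p) S0 * ∏ v ∈ F, Measure.pi (fun _ : ι => bern p) (S v) := by
  revert hd0 hdc hS
  induction F using Finset.induction with
  | empty => intro _ _ _; simp
  | @insert a F ha ih =>
    intro hd0 hdc hS
    have h1' : (S0 ∩ ⋂ v ∈ insert a F, S v) = S a ∩ (S0 ∩ ⋂ v ∈ F, S v) := by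
      rw [Finset.set_biInter_insert]
      ext ω; simp only [Set.mem_inter_iff]; tauto
    rw [h1']
    have hTdep : DependsOnC (c a)ᶜ (S0 ∩ ⋂ v ∈ F, S v) := by
      intro ω₁ ω₂ hagree
      have hS0' : ω₁ ∈ S0 ↔ ω₂ ∈ S0 := by
        apply hS0
        intro i hi
        exact hagree i ((hd0 a (Finset.mem_insert_self a F)).subset_compl_right hi)
      have hSv : ∀ v ∈ F, (ω₁ ∈ S v ↔ ω₂ ∈ S v) := by
        intro v hv
        apply hS v (Finset.mem_insert_of_mem hv)
        intro i hi
        refine hagree i ?_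
        have hne : v ≠ a := by rintro rfl; exact ha hv
        exact (hdc a (Finset.mem_insert_self a F) v (Finset.mem_insert_of_mem hv)
          (fun h => ha (h ▸ hv))).symm.subset_compl_right hi
      simp only [Set.mem_inter_iff, Set.mem_iInter]
      rw [hS0']
      constructor
      · rintro ⟨h1, h2⟩; exact ⟨h1, fun v hv => (hSv v hv).1 (h2 v hv)⟩
      · rintro ⟨h1, h2⟩; exact ⟨h1, fun v hv => (hSv v hv).2 (h2 v hv)⟩
    rw [indep_two p h0 h1 (c a) (S a) _ (hS a (Finset.mem_insert_self a F)) hTdep]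
    rw [ih (fun v hv => hd0 v (Finset.mem_insert_of_mem hv))
      (fun v hv w hw hvw => hdc v (Finset.mem_insert_of_mem hv) w (Finset.mem_insert_of_mem hw) hvw)
      (fun v hv => hS v (Finset.mem_insert_of_mem hv))]
    rw [Finset.prod_insert ha]
    ring

/-- Measure of the event that all coordinates in a finite set are `true`. -/
lemma box_measure (p : ℝ) (h0 : 0 ≤ p) (h1 : p ≤ 1) (I : Finset ι) :
    Measure.pi (fun _ : ι => bern p) {ω | ∀ i ∈ I, ω i = true} =
      (ENNReal.ofReal p) ^ I.card := by
  haveI : IsProbabilityMeasure (bern p) := bern_prob p h0 h1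
  have hset : {ω : ι → Bool | ∀ i ∈ I, ω i = true} =
      Set.univ.pi (fun i => if i ∈ I then ({true} : Set Bool) else Set.univ) := by
    ext ω
    simp only [Set.mem_setOf_eq, Set.mem_pi, Set.mem_univ, forall_true_left]
    constructor
    · intro h i
      by_cases hi : i ∈ I
      · simp [hi, h i hi]
      · simp [hi]
    · intro h i hi
      have := h i
      simp [hi] at this
      exact this
  rw [hset, Measure.pi_pi]
  have : ∀ i : ι, (bern p) (if i ∈ I then ({true} : Set Bool) else Set.univ) =
      if i ∈ I then ENNReal.ofReal p else 1 := by
    intro i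
    rw [apply_ite (bern p), bern_true, bern_univ p h0 h1]
  simp only [this]
  rw [Finset.prod_ite_mem Finset.univ I (fun _ => ENNReal.ofReal p), Finset.univ_inter,
    Finset.prod_const]

lemma degree_event_bound (p : ℝ) (h0 : 0 ≤ p) (h1 : p ≤ 1)
    {α : Type*} (W : Finset α) (g : α → ι) (hg : Set.InjOn g W) (r : ℕ) :
    Measure.pi (fun _ : ι => bern p) {ω | r ≤ (W.filter fun u => ω (g u) = true).card} ≤
      (W.card.choose r) * (ENNReal.ofReal p) ^ r := by
  haveI : IsProbabilityMeasure (bern p) := bern_prob p h0 h1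
  have hsub : {ω : ι → Bool | r ≤ (W.filter fun u => ω (g u) = true).card} ⊆
      ⋃ U ∈ W.powersetCard r, {ω | ∀ u ∈ U, ω (g u) = true} := by
    intro ω hω
    obtain ⟨U, hU1, hU2⟩ := Finset.exists_subset_card_eq hω
    refine Set.mem_biUnion (Finset.mem_powersetCard.2 ⟨hU1.trans (Finset.filter_subset _ _), hU2⟩) ?_
    intro u hu
    exact (Finset.mem_filter.1 (hU1 hu)).2
  refine (measure_mono hsub).trans ((measure_biUnion_finset_le _ _).trans ?_)
  have hbd : ∀ U ∈ W.powersetCard r,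
      Measure.pi (fun _ : ι => bern p) {ω | ∀ u ∈ U, ω (g u) = true} ≤ (ENNReal.ofReal p) ^ r := by
    intro U hU
    obtain ⟨hU1, hU2⟩ := Finset.mem_powersetCard.1 hU
    have : {ω : ι → Bool | ∀ u ∈ U, ω (g u) = true} ⊆ {ω | ∀ i ∈ U.image g, ω i = true} := by
      intro ω hω i hi
      obtain ⟨u, hu, rfl⟩ := Finset.mem_image.1 hi
      exact hω u hu
    refine (measure_mono this).trans ?_
    rw [box_measure p h0 h1]
    rw [Finset.card_image_of_injOn (hg.mono (fun x hx => hU1 hx))]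
    rw [hU2]
  calc ∑ U ∈ W.powersetCard r, Measure.pi (fun _ : ι => bern p) {ω | ∀ u ∈ U, ω (g u) = true}
      ≤ ∑ _U ∈ W.powersetCard r, (ENNReal.ofReal p) ^ r := Finset.sum_le_sum hbd
    _ = (W.card.choose r) * (ENNReal.ofReal p) ^ r := by
        rw [Finset.sum_const, Finset.card_powersetCard, nsmul_eq_mul]
end MeasureAux


section GraphAux
open SimpleGraph
variable {V : Type*}

/-- Deleting one edge: reachability trichotomy. -/
lemma reach_delete_aux (G : SimpleGraph V) (x y : V) :
    ∀ (u w : V), (p : G.Walk u w) →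
      (G.deleteEdges {s(x,y)}).Reachable u w ∨
      ((G.deleteEdges {s(x,y)}).Reachable u x ∧ (G.deleteEdges {s(x,y)}).Reachable y w) ∨
      ((G.deleteEdges {s(x,y)}).Reachable u y ∧ (G.deleteEdges {s(x,y)}).Reachable x w) := by
  intro u w p
  induction p with
  | nil => exact Or.inl (Reachable.refl _)
  | @cons a b w' hadj q' ih =>
    by_cases he : s(a, b) = s(x, y)
    · rw [Sym2.eq_iff] at he
      rcases he with ⟨rfl, rfl⟩ | ⟨rfl, rfl⟩
      · -- a = x, b = y ; walk continues from y
        rcases ih with h1 | ⟨h1, h2⟩ | ⟨h1, h2⟩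
        · exact Or.inr (Or.inl ⟨Reachable.refl _, h1⟩)
        · exact Or.inl (h1.symm.trans h2)
        · exact Or.inl h2
      · -- a = y, b = x
        rcases ih with h1 | ⟨h1, h2⟩ | ⟨h1, h2⟩
        · exact Or.inr (Or.inr ⟨Reachable.refl _, h1⟩)
        · exact Or.inl h2
        · exact Or.inl (h1.symm.trans h2)
    · have hadj' : (G.deleteEdges {s(x,y)}).Adj a b := by
        rw [deleteEdges_adj]
        exact ⟨hadj, by simpa using he⟩
      rcases ih with h1 | ⟨h1, h2⟩ | ⟨h1, h2⟩
      · exact Or.inl (hadj'.reachable.trans h1)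
      · exact Or.inr (Or.inl ⟨hadj'.reachable.trans h1, h2⟩)
      · exact Or.inr (Or.inr ⟨hadj'.reachable.trans h1, h2⟩)

lemma card_cc_delete_le [Fintype V] (G : SimpleGraph V) (x y : V) :
    Nat.card (G.deleteEdges {s(x,y)}).ConnectedComponent ≤
      Nat.card G.ConnectedComponent + 1 := by
  set G' := G.deleteEdges {s(x,y)} with hG'
  have hle : G' ≤ G := deleteEdges_le _
  set φ : G'.ConnectedComponent → G.ConnectedComponent :=
    ConnectedComponent.map (Hom.ofLE hle) with hφ
  classical
  have hinj : Set.InjOn φ ↑(Finset.univ.erase (G'.connectedComponentMk y)) := by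
    intro C1 hC1 C2 hC2 heq
    simp only [Finset.coe_erase, Set.mem_diff, Finset.mem_coe, Finset.coe_univ, Set.mem_univ,
      true_and, Set.mem_singleton_iff, Finset.mem_erase, Finset.mem_univ, and_true] at hC1 hC2
    revert heq hC1 hC2
    refine ConnectedComponent.ind₂ (fun u v => ?_) C1 C2
    intro heq h1 h2
    have heq' : G.Reachable u v := by
      have : G.connectedComponentMk u = G.connectedComponentMk v := by
        have e1 := ConnectedComponent.map_mk (Hom.ofLE hle) u
        have e2 := ConnectedComponent.map_mk (Hom.ofLE hle) v
        calc G.connectedComponentMk u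
            = φ (G'.connectedComponentMk u) := by rw [hφ, e1]; rfl
          _ = φ (G'.connectedComponentMk v) := heq
          _ = G.connectedComponentMk v := by rw [hφ, e2]; rfl
      rwa [ConnectedComponent.eq] at this
    obtain ⟨p⟩ := heq'
    rcases reach_delete_aux G x y u v p with h | ⟨ha, hb⟩ | ⟨ha, hb⟩
    · exact ConnectedComponent.sound h
    · exact absurd (ConnectedComponent.sound hb.symm) h2
    · exact absurd (ConnectedComponent.sound ha) h1
  have h1 : (Finset.univ.erase (G'.connectedComponentMk y)).card ≤
      Nat.card G.ConnectedComponent := by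
    rw [Nat.card_eq_fintype_card, ← Finset.card_univ]
    exact Finset.card_le_card_of_injOn φ (fun a _ => Finset.mem_univ _) hinj
  have h2 : Fintype.card G'.ConnectedComponent - 1 ≤
      (Finset.univ.erase (G'.connectedComponentMk y)).card := by
    rw [Finset.card_erase_of_mem (Finset.mem_univ _), Finset.card_univ]
  rw [Nat.card_eq_fintype_card]
  omega

lemma card_le_edges_add_cc [Fintype V] (G : SimpleGraph V) [inst : Fintype ↑G.edgeSet] :
    Fintype.card V ≤ G.edgeFinset.card + Nat.card G.ConnectedComponent := by
  classical
  suffices H : ∀ (N : ℕ) (G : SimpleGraph V) (inst : Fintype ↑G.edgeSet),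
      (@SimpleGraph.edgeFinset V G inst).card = N →
      Fintype.card V ≤ (@SimpleGraph.edgeFinset V G inst).card + Nat.card G.ConnectedComponent by
    exact H _ G inst rfl
  intro N
  induction N with
  | zero =>
    intro G inst hG
    rw [hG, Nat.zero_add]
    have hnoadj : ∀ u v : V, ¬ G.Adj u v := by
      intro u v hadj
      have hmem : s(u,v) ∈ @SimpleGraph.edgeFinset V G inst := by
        rw [mem_edgeFinset, mem_edgeSet]; exact hadj
      simp [Finset.card_eq_zero.1 hG] at hmem
    have hinj : Function.Injective (G.connectedComponentMk) := by
      intro u v huv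
      rw [ConnectedComponent.eq] at huv
      obtain ⟨p⟩ := huv
      cases p with
      | nil => rfl
      | cons h q => exact absurd h (hnoadj _ _)
    calc Fintype.card V = Nat.card V := (Nat.card_eq_fintype_card).symm
      _ ≤ Nat.card G.ConnectedComponent := Nat.card_le_card_of_injective _ hinj
  | succ n ih =>
    intro G inst hG
    have hne : (@SimpleGraph.edgeFinset V G inst).Nonempty := by
      rw [← Finset.card_pos, hG]; omega
    obtain ⟨e, he⟩ := hne
    revert he
    refine Sym2.inductionOn e (fun x y => ?_)
    intro he
    set G' := G.deleteEdges {s(x,y)} with hG'def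
    have hedges : G'.edgeFinset = (@SimpleGraph.edgeFinset V G inst).erase s(x,y) := by
      ext e'
      simp only [mem_edgeFinset, Finset.mem_erase, hG'def, edgeSet_deleteEdges,
        Set.mem_diff, Set.mem_singleton_iff]
      tauto
    have hcard' : G'.edgeFinset.card = n := by
      rw [hedges, Finset.card_erase_of_mem he, hG]; omega
    have hih := ih G' _ hcard'
    have hcc := card_cc_delete_le G x y
    rw [← hG'def] at hcc
    omega

variable [Fintype V]

/-- Edge count of an induced subgraph equals count of edges with all endpoints inside. -/
lemma card_edgeFinset_induce (H : SimpleGraph V) (C : Finset V)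
    [Fintype ↑H.edgeSet] [Fintype ↑((H.induce (↑C : Set V)).edgeSet)]
    [DecidablePred (fun e : Sym2 V => ∀ x ∈ e, x ∈ C)] :
    (H.induce (↑C : Set V)).edgeFinset.card =
      (H.edgeFinset.filter (fun e => ∀ x ∈ e, x ∈ C)).card := by
  classical
  refine Finset.card_bij (fun e _ => Sym2.map Subtype.val e) ?_ ?_ ?_
  · intro e he
    rw [mem_edgeFinset] at he
    induction e using Sym2.inductionOn with | _ a b => ?_
    rw [mem_edgeSet] at he
    simp only [Sym2.map_pair_eq, Finset.mem_filter, mem_edgeFinset, mem_edgeSet]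
    refine ⟨he, ?_⟩
    intro x hx
    rw [Sym2.mem_iff] at hx
    rcases hx with rfl | rfl
    · exact a.2
    · exact b.2
  · intro e1 _ e2 _ h
    exact Sym2.map.injective Subtype.val_injective h
  · intro e he
    simp only [Finset.mem_filter, mem_edgeFinset] at he
    obtain ⟨he1, he2⟩ := he
    induction e using Sym2.inductionOn with | _ a b => ?_
    rw [mem_edgeSet] at he1
    have ha : a ∈ C := he2 a (Sym2.mem_mk_left a b)
    have hb : b ∈ C := he2 b (Sym2.mem_mk_right a b)
    refine ⟨s(⟨a, ha⟩, ⟨b, hb⟩), ?_, ?_⟩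
    · rw [mem_edgeFinset, mem_edgeSet]
      exact he1
    · simp [Sym2.map_pair_eq]

end GraphAux

theorem restricted_vs_unrestricted_pair_probability
    (n k ℓ m : ℕ) (hk : 2 ≤ k) (hkn : k ≤ n) (p : ℝ) (hp : p ∈ Set.Ioo (0 : ℝ) 1)
    (A B : Finset (Fin n)) (hA : A.card = k) (hB : B.card = k)
    (hl : (A ∩ B).card = ℓ) (hl1 : 1 ≤ ℓ) (hl2 : ℓ ≤ k - 1)
    (TA TB : SimpleGraph (Fin n))
    (hTAe : ∀ u v, TA.Adj u v → u ∈ A ∧ v ∈ A)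
    (hTAt : (TA.induce (A : Set (Fin n))).IsTree)
    (hTBe : ∀ u v, TB.Adj u v → u ∈ B ∧ v ∈ B)
    (hTBt : (TB.induce (B : Set (Fin n))).IsTree)
    (hagree : ∀ u ∈ A ∩ B, ∀ v ∈ A ∩ B, (TA.Adj u v ↔ TB.Adj u v))
    (hm : Nat.card (TA.induce ((A ∩ B : Finset (Fin n)) : Set (Fin n))).ConnectedComponent = m)
    (hsmall : ((k : ℝ) - ℓ) * p < 1)
    (hpos : 0 < 2 * ((k : ℤ) - ℓ) - m + 1) :
    gnp n p {ω | inducedEq (graphOf ω) TA A ∧ inducedEq (graphOf ω) TB B ∧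
        threeNbrs (graphOf ω) A ∧ threeNbrs (graphOf ω) B} ≤
      ENNReal.ofReal ((((k : ℝ) - ℓ) * p) ^ (2 * (k - ℓ) - m + 1)) *
        gnp n p {ω | inducedEq (graphOf ω) TA A ∧ inducedEq (graphOf ω) TB B} := by
  classical
  obtain ⟨hp0, hp1⟩ := hp
  have hlk : ℓ < k := by omega
  set W : Finset (Fin n) := A \ B with hWdef
  set F : Finset (Fin n) := B \ A with hFdef
  set q : ℕ := k - ℓ with hqdef
  have hWq : W.card = q := by
    have h := Finset.card_inter_add_card_sdiff A B
    rw [hl, hA, ← hWdef] at h; omega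
  have hFq : F.card = q := by
    have h := Finset.card_inter_add_card_sdiff B A
    rw [Finset.inter_comm, hl, hB, ← hFdef] at h; omega
  set d : Fin n → ℕ := fun v => ((A ∩ B).filter fun u => TB.Adj v u).card with hddef
  set r : Fin n → ℕ := fun v => 3 - d v with hrdef
  -- ## Combinatorial part: bounding the cross-edge count
  have heB : TB.edgeFinset.card + 1 = k := by
    have h1 := hTBt.card_edgeFinset
    rw [card_edgeFinset_induce TB B] at h1
    have h2 : Fintype.card ↥((B : Set (Fin n))) = k := by
      rw [← hB, ← Fintype.card_coe B]
      exact Fintype.card_congr (Equiv.setCongr rfl)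
    have h3 : TB.edgeFinset.filter (fun e => ∀ x ∈ e, x ∈ B) = TB.edgeFinset := by
      apply Finset.filter_true_of_mem
      intro e he
      rw [SimpleGraph.mem_edgeFinset] at he
      induction e using Sym2.inductionOn with | _ a b => ?_
      rw [SimpleGraph.mem_edgeSet] at he
      intro x hx
      rw [Sym2.mem_iff] at hx
      rcases hx with rfl | rfl
      · exact (hTBe _ _ he).1
      · exact (hTBe _ _ he).2
    rw [h3, h2] at h1
    exact h1
  have hc1 : ℓ ≤ (TB.edgeFinset.filter (fun e => ∀ x ∈ e, x ∈ A ∩ B)).card + m := by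
    have h1 := card_le_edges_add_cc (TA.induce ((A ∩ B : Finset (Fin n)) : Set (Fin n)))
    rw [hm, card_edgeFinset_induce TA (A ∩ B)] at h1
    have h2 : Fintype.card ↥(((A ∩ B : Finset (Fin n)) : Set (Fin n))) = ℓ := by
      rw [← hl, ← Fintype.card_coe (A ∩ B)]
      exact Fintype.card_congr (Equiv.setCongr rfl)
    have h3 : TA.edgeFinset.filter (fun e => ∀ x ∈ e, x ∈ A ∩ B)
        = TB.edgeFinset.filter (fun e => ∀ x ∈ e, x ∈ A ∩ B) := by
      ext e
      induction e using Sym2.inductionOn with | _ a b => ?_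
      simp only [Finset.mem_filter, SimpleGraph.mem_edgeFinset, SimpleGraph.mem_edgeSet]
      constructor
      · rintro ⟨hadj, hmem⟩
        exact ⟨(hagree a (hmem a (Sym2.mem_mk_left a b)) b (hmem b (Sym2.mem_mk_right a b))).1 hadj,
          hmem⟩
      · rintro ⟨hadj, hmem⟩
        exact ⟨(hagree a (hmem a (Sym2.mem_mk_left a b)) b (hmem b (Sym2.mem_mk_right a b))).2 hadj,
          hmem⟩
    rw [h2, h3] at h1
    exact h1
  have hpart1 := Finset.card_filter_add_card_filter_not
    (s := TB.edgeFinset) (fun e => ∀ x ∈ e, x ∈ A ∩ B)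
  have hpart2 := Finset.card_filter_add_card_filter_not
    (s := TB.edgeFinset.filter (fun e => ¬ ∀ x ∈ e, x ∈ A ∩ B)) (fun e => ∀ x ∈ e, x ∉ A)
  have hc3 : ((TB.edgeFinset.filter (fun e => ¬ ∀ x ∈ e, x ∈ A ∩ B)).filter
      (fun e => ¬ ∀ x ∈ e, x ∉ A)).card = ∑ v ∈ F, d v := by
    have hpairs : (∑ v ∈ F, d v)
        = ((F ×ˢ (A ∩ B)).filter fun z : Fin n × Fin n => TB.Adj z.1 z.2).card := by
      rw [Finset.card_filter, Finset.sum_product]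
      simp only [hddef]
      congr 1
      ext v
      rw [Finset.card_filter]
    rw [hpairs]
    refine (Finset.card_bij (fun z _ => s(z.1, z.2)) ?_ ?_ ?_).symm
    · rintro ⟨v, u⟩ hz
      simp only [Finset.mem_filter, Finset.mem_product] at hz
      obtain ⟨⟨hvF, huAB⟩, hadj⟩ := hz
      have hvB : v ∈ B := (Finset.mem_sdiff.1 hvF).1
      have hvA : v ∉ A := (Finset.mem_sdiff.1 hvF).2
      have huA : u ∈ A := (Finset.mem_inter.1 huAB).1
      simp only [Finset.mem_filter, SimpleGraph.mem_edgeFinset, SimpleGraph.mem_edgeSet]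
      refine ⟨⟨hadj, ?_⟩, ?_⟩
      · intro hall
        exact hvA (Finset.mem_inter.1 (hall v (Sym2.mem_mk_left v u))).1
      · intro hall
        exact hall u (Sym2.mem_mk_right v u) huA
    · rintro ⟨v, u⟩ hz ⟨v', u'⟩ hz' heq
      simp only [Finset.mem_filter, Finset.mem_product] at hz hz'
      rw [Sym2.eq_iff] at heq
      rcases heq with ⟨rfl, rfl⟩ | ⟨rfl, rfl⟩
      · rfl
      · exfalso
        have hvA : v ∉ A := (Finset.mem_sdiff.1 hz.1.1).2
        exact hvA (Finset.mem_inter.1 hz'.1.2).1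
    · intro e he
      simp only [Finset.mem_filter, SimpleGraph.mem_edgeFinset] at he
      obtain ⟨⟨he1, hn1⟩, hn2⟩ := he
      induction e using Sym2.inductionOn with | _ a b => ?_
      rw [SimpleGraph.mem_edgeSet] at he1
      have haB : a ∈ B := (hTBe _ _ he1).1
      have hbB : b ∈ B := (hTBe _ _ he1).2
      by_cases haA : a ∈ A <;> by_cases hbA : b ∈ A
      · exfalso
        apply hn1
        intro x hx
        rw [Sym2.mem_iff] at hx
        rcases hx with rfl | rfl
        · exact Finset.mem_inter.2 ⟨haA, haB⟩
        · exact Finset.mem_inter.2 ⟨hbA, hbB⟩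
      · refine ⟨(b, a), ?_, Sym2.eq_swap⟩
        simp only [Finset.mem_filter, Finset.mem_product]
        exact ⟨⟨Finset.mem_sdiff.2 ⟨hbB, hbA⟩, Finset.mem_inter.2 ⟨haA, haB⟩⟩, he1.symm⟩
      · refine ⟨(a, b), ?_, rfl⟩
        simp only [Finset.mem_filter, Finset.mem_product]
        exact ⟨⟨Finset.mem_sdiff.2 ⟨haB, haA⟩, Finset.mem_inter.2 ⟨hbA, hbB⟩⟩, he1⟩
      · exfalso
        apply hn2
        intro x hx
        rw [Sym2.mem_iff] at hx
        rcases hx with rfl | rfl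
        · exact haA
        · exact hbA
  have hsum_d : (∑ v ∈ F, d v) + ℓ + 1 ≤ k + m := by omega
  -- ## Events
  set S0 : Set (Sym2 (Fin n) → Bool) :=
    {ω | inducedEq (graphOf ω) TA A ∧ inducedEq (graphOf ω) TB B} with hS0def
  set SV : Fin n → Set (Sym2 (Fin n) → Bool) :=
    fun v => {ω | r v ≤ (W.filter fun u => ω s(v, u) = true).card} with hSVdef
  set c0 : Set (Sym2 (Fin n)) := {e | (∀ x ∈ e, x ∈ A) ∨ (∀ x ∈ e, x ∈ B)} with hc0def
  set cV : Fin n → Set (Sym2 (Fin n)) := fun v => {e | ∃ u ∈ W, e = s(v, u)} with hcVdef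
  -- inclusion of events
  have hincl : {ω | inducedEq (graphOf ω) TA A ∧ inducedEq (graphOf ω) TB B ∧
      threeNbrs (graphOf ω) A ∧ threeNbrs (graphOf ω) B} ⊆ S0 ∩ ⋂ v ∈ F, SV v := by
    rintro ω ⟨h1, h2, h3, h4⟩
    refine ⟨⟨h1, h2⟩, ?_⟩
    rw [Set.mem_iInter₂]
    intro v hv
    have hvB : v ∈ B := (Finset.mem_sdiff.1 hv).1
    have hvA : v ∉ A := (Finset.mem_sdiff.1 hv).2
    have h3v := h3 v hvA
    have hAu : A = (A ∩ B) ∪ W := by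
      rw [hWdef, Finset.union_comm, Finset.sdiff_union_inter]
    have hsplit : A.filter (fun u => (graphOf ω).Adj v u)
        = ((A ∩ B).filter (fun u => (graphOf ω).Adj v u))
          ∪ (W.filter (fun u => (graphOf ω).Adj v u)) := by
      conv_rhs => rw [← Finset.filter_union]
      rw [← hAu]
    have hdisj : Disjoint ((A ∩ B).filter (fun u => (graphOf ω).Adj v u))
        (W.filter (fun u => (graphOf ω).Adj v u)) := by
      refine Finset.disjoint_filter_filter (Finset.disjoint_left.2 ?_)
      intro x hx1 hx2
      exact (Finset.mem_sdiff.1 hx2).2 (Finset.mem_inter.1 hx1).2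
    rw [hsplit, Finset.card_union_of_disjoint hdisj] at h3v
    have hcap : ((A ∩ B).filter (fun u => (graphOf ω).Adj v u)).card = d v := by
      simp only [hddef]
      congr 1
      apply Finset.filter_congr
      intro u hu
      have huB : u ∈ B := (Finset.mem_inter.1 hu).2
      exact h2 v hvB u huB
    have hWcard : r v ≤ (W.filter (fun u => (graphOf ω).Adj v u)).card := by
      simp only [hrdef]
      omega
    show r v ≤ (W.filter fun u => ω s(v, u) = true).card
    refine le_trans hWcard (Finset.card_le_card ?_)
    intro u hu
    rw [Finset.mem_filter] at hu ⊢
    exact ⟨hu.1, hu.2.2⟩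
  -- dependence structure
  have hgadj : ∀ (ω₁ ω₂ : Sym2 (Fin n) → Bool) (u w : Fin n), ω₁ s(u, w) = ω₂ s(u, w) →
      ((graphOf ω₁).Adj u w ↔ (graphOf ω₂).Adj u w) := by
    intro ω₁ ω₂ u w h
    show (u ≠ w ∧ ω₁ s(u, w) = true) ↔ (u ≠ w ∧ ω₂ s(u, w) = true)
    rw [h]
  have hS0dep : DependsOnC c0 S0 := by
    intro ω₁ ω₂ hag
    have hA' : ∀ u ∈ A, ∀ w ∈ A, ((graphOf ω₁).Adj u w ↔ (graphOf ω₂).Adj u w) := by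
      intro u hu w hw
      refine hgadj ω₁ ω₂ u w (hag _ (Or.inl ?_))
      intro x hx
      rw [Sym2.mem_iff] at hx
      rcases hx with rfl | rfl <;> assumption
    have hB' : ∀ u ∈ B, ∀ w ∈ B, ((graphOf ω₁).Adj u w ↔ (graphOf ω₂).Adj u w) := by
      intro u hu w hw
      refine hgadj ω₁ ω₂ u w (hag _ (Or.inr ?_))
      intro x hx
      rw [Sym2.mem_iff] at hx
      rcases hx with rfl | rfl <;> assumption
    simp only [hS0def, Set.mem_setOf_eq, inducedEq]
    constructor
    · rintro ⟨hh1, hh2⟩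
      exact ⟨fun u hu w hw => ((hA' u hu w hw).symm).trans (hh1 u hu w hw),
        fun u hu w hw => ((hB' u hu w hw).symm).trans (hh2 u hu w hw)⟩
    · rintro ⟨hh1, hh2⟩
      exact ⟨fun u hu w hw => (hA' u hu w hw).trans (hh1 u hu w hw),
        fun u hu w hw => (hB' u hu w hw).trans (hh2 u hu w hw)⟩
  have hSVdep : ∀ v ∈ F, DependsOnC (cV v) (SV v) := by
    intro v hv ω₁ ω₂ hag
    have hfeq : W.filter (fun u => ω₁ s(v, u) = true) = W.filter (fun u => ω₂ s(v, u) = true) := by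
      apply Finset.filter_congr
      intro u hu
      rw [hag s(v, u) ⟨u, hu, rfl⟩]
    simp only [hSVdef, Set.mem_setOf_eq, hfeq]
  -- disjointness
  have hd0 : ∀ v ∈ F, Disjoint c0 (cV v) := by
    intro v hv
    rw [Set.disjoint_right]
    rintro e ⟨u, hu, rfl⟩ hec0
    have hvA : v ∉ A := (Finset.mem_sdiff.1 hv).2
    have huB : u ∉ B := (Finset.mem_sdiff.1 hu).2
    rcases hec0 with h | h
    · exact hvA (h v (Sym2.mem_mk_left v u))
    · exact huB (h u (Sym2.mem_mk_right v u))
  have hdc : ∀ v ∈ F, ∀ w ∈ F, v ≠ w → Disjoint (cV v) (cV w) := by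
    intro v hv w hw hvw
    rw [Set.disjoint_left]
    rintro e ⟨u, hu, rfl⟩ ⟨u', hu', heq⟩
    rw [Sym2.eq_iff] at heq
    rcases heq with ⟨h1, h2⟩ | ⟨h1, h2⟩
    · exact hvw h1
    · have huB : u ∉ B := (Finset.mem_sdiff.1 hu).2
      have hwB : w ∈ B := (Finset.mem_sdiff.1 hw).1
      exact huB (h2 ▸ hwB)
  -- independence factorization
  have hμ : gnp n p (S0 ∩ ⋂ v ∈ F, SV v) = gnp n p S0 * ∏ v ∈ F, gnp n p (SV v) := by
    unfold gnp
    exact indep_many p hp0.le hp1.le F c0 cV S0 SV hd0 hdc hS0dep hSVdep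
  -- per-vertex bound
  have hSvbd : ∀ v ∈ F, gnp n p (SV v) ≤ ENNReal.ofReal ((q : ℝ) * p) ^ (r v) := by
    intro v hv
    have hinj : Set.InjOn (fun u => s(v, u)) ↑W := by
      intro u1 h1 u2 h2 he
      rw [Sym2.eq_iff] at he
      rcases he with ⟨_, h⟩ | ⟨h1', h2'⟩
      · exact h
      · exfalso
        have : v ∈ B := (Finset.mem_sdiff.1 hv).1
        rw [Finset.mem_coe] at h2
        exact (Finset.mem_sdiff.1 h2).2 (h1' ▸ this)
    have h1 := degree_event_bound p hp0.le hp1.le W (fun u => s(v, u)) hinj (r v)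
    rw [hWq] at h1
    have h2 : gnp n p (SV v) ≤ (q.choose (r v) : ENNReal) * (ENNReal.ofReal p) ^ (r v) := by
      simp only [hSVdef]
      unfold gnp
      exact h1
    refine h2.trans ?_
    have h3 : ((q.choose (r v) : ℕ) : ENNReal) ≤ ((q ^ (r v) : ℕ) : ENNReal) :=
      Nat.cast_le.2 (Nat.choose_le_pow _ _)
    rw [Nat.cast_pow] at h3
    calc ((q.choose (r v) : ℕ) : ENNReal) * (ENNReal.ofReal p) ^ (r v)
        ≤ ((q : ℕ) : ENNReal) ^ (r v) * (ENNReal.ofReal p) ^ (r v) := mul_le_mul_left h3 _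
      _ = ENNReal.ofReal ((q : ℝ) * p) ^ (r v) := by
          rw [ENNReal.ofReal_mul (Nat.cast_nonneg q), ENNReal.ofReal_natCast, mul_pow]
  -- sum of requirements
  have hsum_r : 2 * q - m + 1 ≤ ∑ v ∈ F, r v := by
    have h3q : ∀ v ∈ F, 3 ≤ d v + r v := by
      intro v _
      simp only [hrdef]
      omega
    have hs : 3 * F.card ≤ ∑ v ∈ F, (d v + r v) := by
      calc 3 * F.card = ∑ _v ∈ F, 3 := by rw [Finset.sum_const, smul_eq_mul, mul_comm]
        _ ≤ ∑ v ∈ F, (d v + r v) := Finset.sum_le_sum h3q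
    rw [Finset.sum_add_distrib] at hs
    omega
  have hqR : ((q : ℕ) : ℝ) = (k : ℝ) - ℓ := by
    rw [hqdef, Nat.cast_sub hlk.le]
  -- final chain
  calc gnp n p {ω | inducedEq (graphOf ω) TA A ∧ inducedEq (graphOf ω) TB B ∧
        threeNbrs (graphOf ω) A ∧ threeNbrs (graphOf ω) B}
      ≤ gnp n p (S0 ∩ ⋂ v ∈ F, SV v) := measure_mono hincl
    _ = gnp n p S0 * ∏ v ∈ F, gnp n p (SV v) := hμ
    _ ≤ gnp n p S0 * ∏ v ∈ F, ENNReal.ofReal ((q : ℝ) * p) ^ (r v) :=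
        mul_le_mul_right (Finset.prod_le_prod' hSvbd) _
    _ = gnp n p S0 * ENNReal.ofReal ((q : ℝ) * p) ^ (∑ v ∈ F, r v) := by
        rw [Finset.prod_pow_eq_pow_sum]
    _ ≤ gnp n p S0 * ENNReal.ofReal ((q : ℝ) * p) ^ (2 * q - m + 1) := by
        refine mul_le_mul_right (pow_le_pow_of_le_one zero_le ?_ hsum_r) _
        rw [ENNReal.ofReal_le_one, hqR]
        exact hsmall.le
    _ = ENNReal.ofReal ((((k : ℝ) - ℓ) * p) ^ (2 * q - m + 1)) *
        gnp n p S0 := by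
        rw [mul_comm (gnp n p S0),
          ENNReal.ofReal_pow (mul_nonneg (by rw [← hqR]; exact Nat.cast_nonneg q) hp0.le), hqR]
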